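/- Spectral structure of the linearization at the left end state (Section 3.2): Let γ>1, R>0, μ>0, τ>0, κ>0, v₋>0, θ₋>0, p₋ = Rθ₋/v₋, and let σ>0 satisfy σ²v₋ < γp₋. Consider the 3×3 real matrix J with rows (−σv₋/τ, −v₋/τ, 0), (−p₋/μ, −σv₋/μ, R/μ), (0, v₋p₋/κ, −(R/(γ−1))σv₋/κ). Then det J = (1/(μτκ))·(Rσv₋²/(γ−1))·(γp₋ − σ²v₋) > 0 and tr J = −σv₋(R/((γ−1)κ) + 1/μ + 1/τ) < 0; consequently J has exactly one eigenvalue (over ℂ, counted with algebraic multiplicity) with strictly positive real part, and this eigenvalue is real. In particular, the unstable manifold of the profile ODE system at the critical point (v₋,u₋,θ₋) is one-dimensional. -/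

import Mathlib

open Real Filter Topology Polynomial

lemma cubic_spectral_aux (M : Matrix (Fin 3) (Fin 3) ℝ)
    (hdet : 0 < M.det) (htr : M.trace < 0) :
    ∃ r : ℝ, 0 < r ∧
      (M.map Complex.ofReal).charpoly.roots.count (r : ℂ) = 1 ∧
      ∀ l ∈ (M.map Complex.ofReal).charpoly.roots, l ≠ (r : ℂ) → l.re < 0 := by
  set p := M.charpoly with hp
  have hmon : p.Monic := M.charpoly_monic
  have hdeg : p.natDegree = 3 := by
    rw [hp, M.charpoly_natDegree_eq_dim]; rfl
  have hc0 : p.coeff 0 = -M.det := by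
    have := M.det_eq_sign_charpoly_coeff
    simp only [Fintype.card_fin] at this
    rw [this]; ring
  have hc2 : p.coeff 2 = -M.trace := by
    have := M.trace_eq_neg_charpoly_coeff
    simp only [Fintype.card_fin] at this
    linarith [this]
  -- real root via IVT
  have hev0 : p.eval 0 < 0 := by
    rw [← Polynomial.coeff_zero_eq_eval_zero, hc0]; linarith
  have htop : Tendsto (fun x => p.eval x) atTop atTop := by
    apply p.tendsto_atTop_of_leadingCoeff_nonneg
    · rw [Polynomial.degree_eq_natDegree hmon.ne_zero, hdeg]; norm_num
    · rw [hmon.leadingCoeff]; norm_num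
  obtain ⟨b, hb1, hb2⟩ : ∃ b, 0 < b ∧ 0 < p.eval b := by
    have h := (htop.eventually_gt_atTop 0).and (eventually_gt_atTop 0)
    obtain ⟨b, hb⟩ := h.exists
    exact ⟨b, hb.2, hb.1⟩
  obtain ⟨r, hrmem, hr⟩ : ∃ r ∈ Set.Ioo (0:ℝ) b, p.eval r = 0 := by
    have hc : ContinuousOn (fun x => p.eval x) (Set.Icc 0 b) :=
      p.continuous_aeval.continuousOn
    have := intermediate_value_Ioo (le_of_lt hb1) hc
    have h0 : (0:ℝ) ∈ Set.Ioo (p.eval 0) (p.eval b) := ⟨hev0, hb2⟩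
    obtain ⟨r, hrmem, hre⟩ := this h0
    exact ⟨r, hrmem, hre⟩
  have hrpos : 0 < r := hrmem.1
  -- factor p = (X - C r) * g
  set g := p /ₘ (X - C r) with hg
  have hfac : (X - C r) * g = p := mul_divByMonic_eq_iff_isRoot.mpr hr
  have hgmon : g.Monic := (monic_X_sub_C r).of_mul_monic_left (by rwa [hfac])
  have hgdeg : g.natDegree = 2 := by
    have := Polynomial.natDegree_mul (monic_X_sub_C r).ne_zero hgmon.ne_zero
    rw [hfac, hdeg, natDegree_X_sub_C] at this
    omega
  set bb := g.coeff 1 with hbb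
  set cc := g.coeff 0 with hcc
  have hcoef0 : -r * cc = -M.det := by
    rw [← hc0, ← hfac, Polynomial.mul_coeff_zero]
    simp [hcc]
  have hccpos : 0 < cc := by
    have : r * cc = M.det := by linarith
    have := hdet
    nlinarith
  have hg2 : g.coeff 2 = 1 := by
    have := hgmon.coeff_natDegree
    rwa [hgdeg] at this
  have hcoef2 : bb - r = -M.trace := by
    rw [← hc2, ← hfac]
    rw [sub_mul]
    rw [Polynomial.coeff_sub]
    have h1 : (X * g).coeff 2 = g.coeff 1 := by
      simpa using Polynomial.coeff_X_mul g 1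
    have h2 : (C r * g).coeff 2 = r := by
      rw [Polynomial.coeff_C_mul, hg2, mul_one]
    rw [h1, h2]
  have hbbpos : 0 < bb := by linarith
  -- complex factorization
  set q := (M.map Complex.ofReal).charpoly with hq
  have hmapeq : M.map Complex.ofReal = M.map ⇑(algebraMap ℝ ℂ) := by
    ext i j; simp [Matrix.map_apply]
  have hqmap : q = p.map (algebraMap ℝ ℂ) := by
    rw [hq, hmapeq]; exact M.charpoly_map (algebraMap ℝ ℂ)
  set gC := g.map (algebraMap ℝ ℂ) with hgC
  have hgCmon : gC.Monic := hgmon.map _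
  have hgCdeg : gC.natDegree = 2 := by
    rw [hgC, Polynomial.natDegree_map_eq_of_injective Complex.ofReal_injective, hgdeg]
  have hsplits : gC.Splits := IsAlgClosed.splits gC
  have hcard : gC.roots.card = 2 := by
    rw [splits_iff_card_roots.mp hsplits, hgCdeg]
  obtain ⟨z1, z2, hz12⟩ := Multiset.card_eq_two.mp hcard
  have hprod : gC = (X - C z1) * (X - C z2) := by
    have := hsplits.eq_prod_roots_of_monic hgCmon
    rw [hz12] at this
    simpa [Multiset.map_cons, Multiset.prod_cons] using this
  have hexp : gC = X ^ 2 - C (z1 + z2) * X + C (z1 * z2) := by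
    rw [hprod, C_add, C_mul]; ring
  have hgc0 : z1 * z2 = (cc : ℂ) := by
    have h1 : gC.coeff 0 = (cc : ℂ) := by
      rw [hgC, Polynomial.coeff_map, hcc]; simp
    rw [hexp] at h1
    simpa using h1
  have hgc1 : z1 + z2 = -(bb : ℂ) := by
    have h1 : gC.coeff 1 = (bb : ℂ) := by
      rw [hgC, Polynomial.coeff_map, hbb]; simp
    rw [hexp] at h1
    simp [Polynomial.coeff_X_pow] at h1
    linear_combination -h1
  -- real part analysis
  have hre1 : z1.re < 0 ∧ z2.re < 0 := by
    have e1 : z1.re * z2.re - z1.im * z2.im = cc := by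
      have := congrArg Complex.re hgc0; simpa [Complex.mul_re] using this
    have e2 : z1.re * z2.im + z1.im * z2.re = 0 := by
      have := congrArg Complex.im hgc0; simpa [Complex.mul_im] using this
    have e3 : z1.re + z2.re = -bb := by
      have := congrArg Complex.re hgc1; simpa using this
    have e4 : z1.im + z2.im = 0 := by
      have := congrArg Complex.im hgc1; simpa using this
    have him : z2.im = -z1.im := by linarith
    have key : z1.im * (z2.re - z1.re) = 0 := by
      rw [him] at e2; nlinarith [e2]
    rcases mul_eq_zero.mp key with h | h
    · -- real case
      have h2 : z2.im = 0 := by rw [him, h, neg_zero]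
      rw [h, h2] at e1
      simp at e1
      constructor <;> nlinarith
    · have h5 : z2.re = z1.re := by linarith
      constructor <;> linarith
  -- roots of q
  have hqfac : q = (X - C (r : ℂ)) * gC := by
    rw [hqmap, ← hfac, Polynomial.map_mul, Polynomial.map_sub, Polynomial.map_X,
      Polynomial.map_C]
    simp
    exact Or.inl rfl
  have hqroots : q.roots = (r : ℂ) ::ₘ (z1 ::ₘ {z2}) := by
    rw [hqfac, Polynomial.roots_mul, Polynomial.roots_X_sub_C, hz12]
    · rfl
    · rw [← hqfac]
      exact ((M.map Complex.ofReal).charpoly_monic).ne_zero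
  have hz1ne : z1 ≠ (r : ℂ) := by
    intro h
    have : z1.re = r := by rw [h]; rfl
    linarith [hre1.1]
  have hz2ne : z2 ≠ (r : ℂ) := by
    intro h
    have : z2.re = r := by rw [h]; rfl
    linarith [hre1.2]
  refine ⟨r, hrpos, ?_, ?_⟩
  · rw [hqroots]
    simp [Multiset.count_cons, hz1ne.symm, hz2ne.symm,
      Ne.symm hz1ne, Ne.symm hz2ne]
  · intro l hl hlne
    rw [hqroots] at hl
    simp [Multiset.mem_cons, Multiset.mem_singleton] at hl
    rcases hl with h | h | h
    · exact absurd h hlne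
    · rw [h]; exact hre1.1
    · rw [h]; exact hre1.2


/-- Spectral structure of the linearization of the profile ODE at the left end state:
the Jacobian `J` has positive determinant and negative trace with the stated closed
forms, and (over `ℂ`, counting algebraic multiplicity) exactly one eigenvalue with
strictly positive real part, which is real and simple, all other eigenvalues having
strictly negative real part; in particular the unstable manifold at `(v₋, u₋, θ₋)` is
one-dimensional. -/
theorem linearization_spectral_structure
    (γ R μ τ κ v θ σ p : ℝ) (hγ : 1 < γ) (hR : 0 < R) (hμ : 0 < μ) (hτ : 0 < τ)
    (hκ : 0 < κ) (hv : 0 < v) (hθ : 0 < θ) (hσ : 0 < σ)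
    (hp : p = R * θ / v) (hsub : σ ^ 2 * v < γ * p)
    (J : Matrix (Fin 3) (Fin 3) ℝ)
    (hJ : J = !![-(σ * v) / τ, -v / τ, 0;
                 -p / μ, -(σ * v) / μ, R / μ;
                 0, v * p / κ, -(R / (γ - 1)) * (σ * v) / κ]) :
    J.det = 1 / (μ * τ * κ) * (R * σ * v ^ 2 / (γ - 1)) * (γ * p - σ ^ 2 * v) ∧
    0 < J.det ∧
    J.trace = -(σ * v) * (R / ((γ - 1) * κ) + 1 / μ + 1 / τ) ∧
    J.trace < 0 ∧
    ∃ r : ℝ, 0 < r ∧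
      (J.map Complex.ofReal).charpoly.roots.count (r : ℂ) = 1 ∧
      ∀ l ∈ (J.map Complex.ofReal).charpoly.roots, l ≠ (r : ℂ) → l.re < 0 := by
  have hγ1 : 0 < γ - 1 := by linarith
  have hppos : 0 < p := by rw [hp]; positivity
  have hdet : J.det = 1 / (μ * τ * κ) * (R * σ * v ^ 2 / (γ - 1)) * (γ * p - σ ^ 2 * v) := by
    subst hJ
    rw [Matrix.det_fin_three]
    simp [Matrix.cons_val_zero, Matrix.cons_val_one]
    field_simp
    ring
  have htr : J.trace = -(σ * v) * (R / ((γ - 1) * κ) + 1 / μ + 1 / τ) := by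
    subst hJ
    rw [Matrix.trace_fin_three]
    simp
    field_simp
    ring
  have hdetpos : 0 < J.det := by
    rw [hdet]
    have h1 : 0 < γ * p - σ ^ 2 * v := by linarith
    positivity
  have htrneg : J.trace < 0 := by
    rw [htr]
    have h1 : 0 < R / ((γ - 1) * κ) + 1 / μ + 1 / τ := by positivity
    nlinarith [mul_pos hσ hv]
  obtain ⟨r, hr1, hr2, hr3⟩ := cubic_spectral_aux J hdetpos htrneg
  exact ⟨hdet, hdetpos, htr, htrneg, r, hr1, hr2, hr3⟩
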